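/- Let K be a field and let (A,d_A) and (B,d_B) be graded commutative dg-division rings over K, with a dg-extension φ:(B,d_B)→(A,d_A). Then ker(d_A) and ker(d_B) are graded-commutative graded-division rings. -/

import Mathlib

open scoped TensorProduct

section DGCore

variable {A : Type} [Ring A] {B : Type} [Ring B]

/-- `(A, d)` together with the grading `𝒜` is a differential graded ring:
`d` is a square-zero additive endomorphism of degree `1` satisfying the graded
Leibniz rule. -/
structure IsDGRing (𝒜 : ℤ → AddSubgroup A) (d : A →+ A) : Prop where
  d_sq : ∀ x, d (d x) = 0
  d_mem : ∀ (i : ℤ), ∀ x ∈ 𝒜 i, d x ∈ 𝒜 (i + 1)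
  leibniz : ∀ (i : ℤ) (a b : A), a ∈ 𝒜 i →
    d (a * b) = d a * b + ((Int.negOnePow i : ℤ)) • (a * d b)

/-- A homomorphism of differential graded rings (a dg-extension). -/
structure IsDGHom (𝒜 : ℤ → AddSubgroup A) (dA : A →+ A)
    (𝒝 : ℤ → AddSubgroup B) (dB : B →+ B) (φ : A →+* B) : Prop where
  map_mem : ∀ (i : ℤ), ∀ x ∈ 𝒜 i, φ x ∈ 𝒝 i
  map_d : ∀ x, φ (dA x) = dB (φ x)

/-- Graded commutativity: `a * b = (-1)^{|a||b|} b * a` for homogeneous elements. -/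
def IsGradedComm (𝒜 : ℤ → AddSubgroup A) : Prop :=
  ∀ (i j : ℤ) (a b : A), a ∈ 𝒜 i → b ∈ 𝒜 j →
    a * b = ((Int.negOnePow (i * j) : ℤ)) • (b * a)

/-- A dg-ring is acyclic if its homology vanishes, i.e. every cycle is a boundary. -/
def IsAcyclic (d : A →+ A) : Prop := ∀ x, d x = 0 → ∃ y, d y = x

/-- A dg left ideal: a graded additive subgroup closed under the differential and
under left multiplication. -/
def IsDGLeftIdeal (𝒜 : ℤ → AddSubgroup A) [GradedRing 𝒜] (d : A →+ A)
    (I : AddSubgroup A) : Prop :=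
  (∀ (a : A), ∀ x ∈ I, a * x ∈ I) ∧ (∀ x ∈ I, d x ∈ I) ∧
    (∀ x ∈ I, ∀ i : ℤ, (DirectSum.decompose 𝒜 x i : A) ∈ I)

/-- A dg right ideal. -/
def IsDGRightIdeal (𝒜 : ℤ → AddSubgroup A) [GradedRing 𝒜] (d : A →+ A)
    (I : AddSubgroup A) : Prop :=
  (∀ (a : A), ∀ x ∈ I, x * a ∈ I) ∧ (∀ x ∈ I, d x ∈ I) ∧
    (∀ x ∈ I, ∀ i : ℤ, (DirectSum.decompose 𝒜 x i : A) ∈ I)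

/-- A dg-division ring: the only dg left ideals and the only dg right ideals
are `0` and the whole ring. -/
def IsDGDivisionRing (𝒜 : ℤ → AddSubgroup A) [GradedRing 𝒜] (d : A →+ A) : Prop :=
  (0 : A) ≠ 1 ∧ (∀ I, IsDGLeftIdeal 𝒜 d I → I = ⊥ ∨ I = ⊤) ∧
    (∀ I, IsDGRightIdeal 𝒜 d I → I = ⊥ ∨ I = ⊤)

/-- A graded division ring (gr-field): every nonzero homogeneous element is invertible. -/
def IsGradedDivisionRing (𝒜 : ℤ → AddSubgroup A) : Prop :=
  (0 : A) ≠ 1 ∧ ∀ (i : ℤ) (x : A), x ∈ 𝒜 i → x ≠ 0 → IsUnit x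

/-- The relations defining `B ⊗[A] B` inside `B ⊗[ℤ] B`, for an extension `φ : A →+* B`. -/
def sepRel (φ : A →+* B) : Submodule ℤ (B ⊗[ℤ] B) :=
  Submodule.span ℤ {x | ∃ (b b' : B) (a : A),
    x = (b * φ a) ⊗ₜ[ℤ] b' - b ⊗ₜ[ℤ] (φ a * b')}

/-- The balanced tensor product `B ⊗[A] B` for an extension `φ : A →+* B`. -/
abbrev SepTensor (φ : A →+* B) := (B ⊗[ℤ] B) ⧸ sepRel φ

/-- The canonical projection `B ⊗[ℤ] B → B ⊗[A] B`. -/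
noncomputable def sepMk (φ : A →+* B) : B ⊗[ℤ] B →ₗ[ℤ] SepTensor φ := (sepRel φ).mkQ

/-- The multiplication map `μ : B ⊗[A] B → B`. -/
noncomputable def sepMul (φ : A →+* B) : SepTensor φ →ₗ[ℤ] B :=
  Submodule.liftQ _ (TensorProduct.lift (LinearMap.mul ℤ B)) (by
    rw [sepRel, Submodule.span_le]
    rintro x ⟨b, b', a, rfl⟩
    refine LinearMap.mem_ker.mpr ?_
    erw [map_sub, TensorProduct.lift.tmul, TensorProduct.lift.tmul]
    simp [mul_assoc])

/-- Left multiplication by `b` on `B ⊗[A] B`. -/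
noncomputable def sepLMul (φ : A →+* B) (b : B) : SepTensor φ →ₗ[ℤ] SepTensor φ :=
  Submodule.mapQ _ _ (TensorProduct.map (LinearMap.mulLeft ℤ b) LinearMap.id) (by
    rw [sepRel, Submodule.span_le]
    rintro x ⟨b₀, b', a, rfl⟩
    simp only [SetLike.mem_coe, Submodule.mem_comap, map_sub, TensorProduct.map_tmul,
      LinearMap.mulLeft_apply, LinearMap.id_apply]
    exact Submodule.subset_span ⟨b * b₀, b', a, by
      erw [map_sub, TensorProduct.map_tmul, TensorProduct.map_tmul]
      simp [mul_assoc]⟩)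

/-- Right multiplication by `b` on `B ⊗[A] B`. -/
noncomputable def sepRMul (φ : A →+* B) (b : B) : SepTensor φ →ₗ[ℤ] SepTensor φ :=
  Submodule.mapQ _ _ (TensorProduct.map LinearMap.id (LinearMap.mulRight ℤ b)) (by
    rw [sepRel, Submodule.span_le]
    rintro x ⟨b₀, b', a, rfl⟩
    simp only [SetLike.mem_coe, Submodule.mem_comap, map_sub, TensorProduct.map_tmul,
      LinearMap.mulRight_apply, LinearMap.id_apply]
    exact Submodule.subset_span ⟨b₀, b' * b, a, by
      erw [map_sub, TensorProduct.map_tmul, TensorProduct.map_tmul]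
      simp [mul_assoc]⟩)

/-- The grading on `B ⊗[A] B`: the degree `n` part is generated by the classes of
`b ⊗ b'` with `b, b'` homogeneous of degrees summing to `n`. -/
noncomputable def sepGrading (φ : A →+* B) (𝒝 : ℤ → AddSubgroup B) (n : ℤ) :
    AddSubgroup (SepTensor φ) :=
  AddSubgroup.closure {x | ∃ (i j : ℤ) (b b' : B), b ∈ 𝒝 i ∧ b' ∈ 𝒝 j ∧ i + j = n ∧
    x = sepMk φ (b ⊗ₜ[ℤ] b')}

/-- The sign involution `b ↦ (-1)^{|b|} b` of a graded ring. -/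
noncomputable def signMap (𝒝 : ℤ → AddSubgroup B) [GradedRing 𝒝] : B →+ B :=
  (DirectSum.toAddMonoid fun i =>
      (smulAddHom ℤ B ((Int.negOnePow i : ℤ))).comp (𝒝 i).subtype).comp
    (DirectSum.decomposeAddEquiv 𝒝).toAddMonoidHom

lemma signMap_of_mem (𝒝 : ℤ → AddSubgroup B) [GradedRing 𝒝] {i : ℤ} {x : B}
    (hx : x ∈ 𝒝 i) : signMap 𝒝 x = ((Int.negOnePow i : ℤ)) • x := by
  classical
  unfold signMap
  simp only [AddMonoidHom.comp_apply, AddEquiv.coe_toAddMonoidHom,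
    DirectSum.decomposeAddEquiv_apply, DirectSum.decompose_of_mem 𝒝 hx,
    DirectSum.toAddMonoid_of]
  rfl

/-- The differential `d ⊗ 1 + ε ⊗ d` on `B ⊗[ℤ] B` (with Koszul sign). -/
noncomputable def sepDiffPre (𝒝 : ℤ → AddSubgroup B) [GradedRing 𝒝] (dB : B →+ B) :
    B ⊗[ℤ] B →ₗ[ℤ] B ⊗[ℤ] B :=
  TensorProduct.map dB.toIntLinearMap LinearMap.id +
    TensorProduct.map (signMap 𝒝).toIntLinearMap dB.toIntLinearMap

/-- `D` is the differential induced on `B ⊗[A] B` by `d_B ⊗ 1 + ε ⊗ d_B`. -/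
def IsSepDiff (φ : A →+* B) (𝒝 : ℤ → AddSubgroup B) [GradedRing 𝒝] (dB : B →+ B)
    (D : SepTensor φ →+ SepTensor φ) : Prop :=
  ∀ x : B ⊗[ℤ] B, D (sepMk φ x) = sepMk φ (sepDiffPre 𝒝 dB x)

/-- `ρ : B → B ⊗[A] B` is a `B`-`B`-bimodule section of the multiplication map. -/
def IsSepSection (φ : A →+* B) (ρ : B →+ SepTensor φ) : Prop :=
  (∀ b, sepMul φ (ρ b) = b) ∧
    (∀ (b₁ c b₂ : B), ρ (b₁ * c * b₂) = sepLMul φ b₁ (sepRMul φ b₂ (ρ c)))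

/-- The extension `φ : A →+* B` is separable: the multiplication map
`B ⊗[A] B → B` splits as a bimodule map. -/
def IsSeparableExt (φ : A →+* B) : Prop := ∃ ρ : B →+ SepTensor φ, IsSepSection φ ρ

/-- The extension `φ : A →+* B` of graded rings is graded-separable: the multiplication
map `B ⊗[A] B → B` splits as a map of graded bimodules. -/
def IsGrSeparable (φ : A →+* B) (𝒝 : ℤ → AddSubgroup B) : Prop :=
  ∃ ρ : B →+ SepTensor φ, IsSepSection φ ρ ∧
    ∀ (n : ℤ), ∀ b ∈ 𝒝 n, ρ b ∈ sepGrading φ 𝒝 n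

/-- The dg-extension `φ : (A,d_A) →  (B,d_B)` is dg-separable: the multiplication map
`B ⊗[A] B → B` splits as a map of differential graded bimodules. -/
def IsDGSeparable (φ : A →+* B) (𝒝 : ℤ → AddSubgroup B) [GradedRing 𝒝]
    (dB : B →+ B) : Prop :=
  ∃ D : SepTensor φ →+ SepTensor φ, IsSepDiff φ 𝒝 dB D ∧
    ∃ ρ : B →+ SepTensor φ, IsSepSection φ ρ ∧
      (∀ (n : ℤ), ∀ b ∈ 𝒝 n, ρ b ∈ sepGrading φ 𝒝 n) ∧
      (∀ b, D (ρ b) = ρ (dB b))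

end DGCore

section Aux

variable {R : Type} [Ring R]

lemma aux_decompose_mul_right (𝒜 : ℤ → AddSubgroup R) [GradedRing 𝒜]
    {i : ℤ} {x : R} (hx : x ∈ 𝒜 i) (b : R) (j : ℤ) :
    (DirectSum.decompose 𝒜 (b * x) j : R) = (DirectSum.decompose 𝒜 b (j - i) : R) * x := by
  induction b using DirectSum.Decomposition.inductionOn 𝒜 with
  | zero => simp
  | @homogeneous k b =>
    obtain ⟨b, hb⟩ := b
    by_cases h : j = k + i
    · subst h
      rw [DirectSum.decompose_of_mem_same 𝒜 (SetLike.mul_mem_graded hb hx)]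
      rw [show k + i - i = k by ring, DirectSum.decompose_of_mem_same 𝒜 hb]
    · rw [DirectSum.decompose_of_mem_ne 𝒜 (SetLike.mul_mem_graded hb hx) (Ne.symm h)]
      rw [DirectSum.decompose_of_mem_ne 𝒜 hb (by omega), zero_mul]
  | add b b' ihb ihb' =>
    simp only [add_mul, DirectSum.decompose_add, DirectSum.add_apply,
      AddSubgroup.coe_add, ihb, ihb']

lemma aux_decompose_mul_left (𝒜 : ℤ → AddSubgroup R) [GradedRing 𝒜]
    {i : ℤ} {x : R} (hx : x ∈ 𝒜 i) (b : R) (j : ℤ) :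
    (DirectSum.decompose 𝒜 (x * b) j : R) = x * (DirectSum.decompose 𝒜 b (j - i) : R) := by
  induction b using DirectSum.Decomposition.inductionOn 𝒜 with
  | zero => simp
  | @homogeneous k b =>
    obtain ⟨b, hb⟩ := b
    by_cases h : j = i + k
    · subst h
      rw [DirectSum.decompose_of_mem_same 𝒜 (SetLike.mul_mem_graded hx hb)]
      rw [show i + k - i = k by ring, DirectSum.decompose_of_mem_same 𝒜 hb]
    · rw [DirectSum.decompose_of_mem_ne 𝒜 (SetLike.mul_mem_graded hx hb) (Ne.symm h)]
      rw [DirectSum.decompose_of_mem_ne 𝒜 hb (by omega), mul_zero]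
  | add b b' ihb ihb' =>
    simp only [mul_add, DirectSum.decompose_add, DirectSum.add_apply,
      AddSubgroup.coe_add, ihb, ihb']

lemma aux_d_one (𝒜 : ℤ → AddSubgroup R) [GradedRing 𝒜] (d : R →+ R)
    (hA : IsDGRing 𝒜 d) : d 1 = 0 := by
  have h := hA.leibniz 0 1 1 (SetLike.one_mem_graded 𝒜)
  simp only [one_mul, mul_one, Int.negOnePow_zero, Units.val_one, one_smul] at h
  nth_rewrite 1 [← add_zero (d 1)] at h
  exact (add_left_cancel h).symm

lemma aux_cycle_inverse (𝒜 : ℤ → AddSubgroup R) [GradedRing 𝒜] (d : R →+ R)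
    (hA : IsDGRing 𝒜 d) (hdiv : IsDGDivisionRing 𝒜 d) :
    ∀ (i : ℤ) (x : R), x ∈ 𝒜 i → d x = 0 → x ≠ 0 →
      ∃ y ∈ 𝒜 (-i), d y = 0 ∧ x * y = 1 ∧ y * x = 1 := by
  intro i x hxi hdx hx0
  -- the left ideal R·x
  set I : AddSubgroup R := (AddMonoidHom.mulRight x).range with hI
  have hmemI : ∀ z, z ∈ I ↔ ∃ b, b * x = z := by
    intro z; simp [hI, AddMonoidHom.mem_range]
  have hIleft : IsDGLeftIdeal 𝒜 d I := by
    refine ⟨?_, ?_, ?_⟩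
    · rintro a z hz
      obtain ⟨b, rfl⟩ := (hmemI z).1 hz
      exact (hmemI _).2 ⟨a * b, mul_assoc a b x⟩
    · rintro z hz
      obtain ⟨b, rfl⟩ := (hmemI z).1 hz
      clear hz
      induction b using DirectSum.Decomposition.inductionOn 𝒜 with
      | zero => simpa using I.zero_mem
      | @homogeneous k b =>
        obtain ⟨b, hb⟩ := b
        rw [hA.leibniz k b x hb, hdx, mul_zero, smul_zero, add_zero]
        exact (hmemI _).2 ⟨d b, rfl⟩
      | add b b' ihb ihb' =>
        rw [add_mul, map_add]
        exact I.add_mem ihb ihb'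
    · rintro z hz j
      obtain ⟨b, rfl⟩ := (hmemI z).1 hz
      rw [aux_decompose_mul_right 𝒜 hxi b j]
      exact (hmemI _).2 ⟨_, rfl⟩
  -- the right ideal x·R
  set J : AddSubgroup R := (AddMonoidHom.mulLeft x).range with hJ
  have hmemJ : ∀ z, z ∈ J ↔ ∃ b, x * b = z := by
    intro z; simp [hJ, AddMonoidHom.mem_range]
  have hJright : IsDGRightIdeal 𝒜 d J := by
    refine ⟨?_, ?_, ?_⟩
    · rintro a z hz
      obtain ⟨b, rfl⟩ := (hmemJ z).1 hz
      exact (hmemJ _).2 ⟨b * a, (mul_assoc x b a).symm⟩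
    · rintro z hz
      obtain ⟨b, rfl⟩ := (hmemJ z).1 hz
      rw [hA.leibniz i x b hxi, hdx, zero_mul, zero_add]
      exact J.zsmul_mem ((hmemJ _).2 ⟨d b, rfl⟩) _
    · rintro z hz j
      obtain ⟨b, rfl⟩ := (hmemJ z).1 hz
      rw [aux_decompose_mul_left 𝒜 hxi b j]
      exact (hmemJ _).2 ⟨_, rfl⟩
  -- I and J are nonzero, hence the whole ring
  have hxI : x ∈ I := (hmemI x).2 ⟨1, one_mul x⟩
  have hxJ : x ∈ J := (hmemJ x).2 ⟨1, mul_one x⟩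
  have hItop : I = ⊤ := by
    rcases hdiv.2.1 I hIleft with h | h
    · exact absurd (h ▸ hxI) (by simpa using hx0)
    · exact h
  have hJtop : J = ⊤ := by
    rcases hdiv.2.2 J hJright with h | h
    · exact absurd (h ▸ hxJ) (by simpa using hx0)
    · exact h
  obtain ⟨y, hy⟩ := (hmemI 1).1 (hItop ▸ AddSubgroup.mem_top 1)
  obtain ⟨z, hz⟩ := (hmemJ 1).1 (hJtop ▸ AddSubgroup.mem_top 1)
  -- homogenize
  set y₀ : R := (DirectSum.decompose 𝒜 y (-i) : R) with hy₀
  set z₀ : R := (DirectSum.decompose 𝒜 z (-i) : R) with hz₀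
  have hy₀mem : y₀ ∈ 𝒜 (-i) := SetLike.coe_mem _
  have hy₀x : y₀ * x = 1 := by
    have := aux_decompose_mul_right 𝒜 hxi y 0
    rw [hy, DirectSum.decompose_of_mem_same 𝒜 (SetLike.one_mem_graded 𝒜)] at this
    rw [hy₀, show -i = 0 - i by ring, ← this]
  have hxz₀ : x * z₀ = 1 := by
    have := aux_decompose_mul_left 𝒜 hxi z 0
    rw [hz, DirectSum.decompose_of_mem_same 𝒜 (SetLike.one_mem_graded 𝒜)] at this
    rw [hz₀, show -i = 0 - i by ring, ← this]
  have hyz : y₀ = z₀ := by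
    calc y₀ = y₀ * (x * z₀) := by rw [hxz₀, mul_one]
    _ = (y₀ * x) * z₀ := by rw [mul_assoc]
    _ = z₀ := by rw [hy₀x, one_mul]
  have hxy₀ : x * y₀ = 1 := by rw [hyz]; exact hxz₀
  -- dy₀ = 0
  have hdy₀x : d y₀ * x = 0 := by
    have h := hA.leibniz (-i) y₀ x hy₀mem
    rw [hy₀x, hdx, mul_zero, smul_zero, add_zero, aux_d_one 𝒜 d hA] at h
    exact h.symm
  have hdy₀ : d y₀ = 0 := by
    calc d y₀ = d y₀ * (x * y₀) := by rw [hxy₀, mul_one]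
    _ = (d y₀ * x) * y₀ := by rw [mul_assoc]
    _ = 0 := by rw [hdy₀x, zero_mul]
  exact ⟨y₀, hy₀mem, hdy₀, hxy₀, hy₀x⟩

end Aux

/-- For a dg-extension `φ : (B,d_B) → (A,d_A)` of graded commutative
dg-division rings over a field `K`, the cycles `ker d_A` and `ker d_B` are
graded-commutative graded-division rings. -/
theorem cycles_are_graded_division
    {K A B : Type} [Field K] [Ring A] [Ring B] [Algebra K A] [Algebra K B]
    (𝒜 : ℤ → AddSubgroup A) [GradedRing 𝒜] (𝒝 : ℤ → AddSubgroup B) [GradedRing 𝒝]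
    (dA : A →+ A) (dB : B →+ B)
    (hA : IsDGRing 𝒜 dA) (hB : IsDGRing 𝒝 dB)
    (hAK : ∀ (k : K) (x : A), dA (k • x) = k • dA x)
    (hBK : ∀ (k : K) (x : B), dB (k • x) = k • dB x)
    (hAcomm : IsGradedComm 𝒜) (hBcomm : IsGradedComm 𝒝)
    (hAdiv : IsDGDivisionRing 𝒜 dA) (hBdiv : IsDGDivisionRing 𝒝 dB)
    (φ : B →ₐ[K] A) (hφ : IsDGHom 𝒝 dB 𝒜 dA φ.toRingHom) :
    ((∀ (i j : ℤ) (x y : A), x ∈ 𝒜 i → y ∈ 𝒜 j → dA x = 0 → dA y = 0 →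
        x * y = ((Int.negOnePow (i * j) : ℤ)) • (y * x)) ∧
      (∀ (i : ℤ) (x : A), x ∈ 𝒜 i → dA x = 0 → x ≠ 0 →
        ∃ y ∈ 𝒜 (-i), dA y = 0 ∧ x * y = 1 ∧ y * x = 1)) ∧
    ((∀ (i j : ℤ) (x y : B), x ∈ 𝒝 i → y ∈ 𝒝 j → dB x = 0 → dB y = 0 →
        x * y = ((Int.negOnePow (i * j) : ℤ)) • (y * x)) ∧
      (∀ (i : ℤ) (x : B), x ∈ 𝒝 i → dB x = 0 → x ≠ 0 →
        ∃ y ∈ 𝒝 (-i), dB y = 0 ∧ x * y = 1 ∧ y * x = 1)) := by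
  refine ⟨⟨fun i j x y hx hy _ _ => hAcomm i j x y hx hy,
    fun i x hx hdx hx0 => aux_cycle_inverse 𝒜 dA hA hAdiv i x hx hdx hx0⟩,
    ⟨fun i j x y hx hy _ _ => hBcomm i j x y hx hy,
    fun i x hx hdx hx0 => aux_cycle_inverse 𝒝 dB hB hBdiv i x hx hdx hx0⟩⟩
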